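/- For the isosceles triangle A = (0,a), B = (−b,0), C = (b,0) with a, b > 0 and a ≠ √3·b, the Fermat point is T = (0, b/√3), the centroid is G = (0, a/3), the orthocenter is H = (0, b²/a), and T = (1 − t)G + tH with t = a/(a + √3·b). -/

import Mathlib

/-- For the isosceles triangle `A = (0,a)`, `B = (−b,0)`, `C = (b,0)` with
`a, b > 0` and `a ≠ √3·b`: the Fermat point is `T = (0, b/√3)`, the centroid
is `G = (0, a/3)`, `H = (0, b²/a)` is the orthocenter (lies on both altitudes
from `B` and `C`), and `T = (1 − t)G + tH` with `t = a/(a + √3·b)`. -/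
theorem stmt16 (a b : ℝ) (ha : 0 < a) (hb : 0 < b) (hne : a ≠ Real.sqrt 3 * b) :
    let u := (Real.sqrt 3 * b * b - Real.sqrt 3 * a ^ 2 - a * b - a * b) * (b - b)
    let v := (a ^ 2 + Real.sqrt 3 * a * b + Real.sqrt 3 * a * b + 3 * b * b) * (b + b)
    let d := 2 * Real.sqrt 3 * (a ^ 2 + b ^ 2 + b ^ 2) + 6 * a * b + 6 * a * b
        + 2 * Real.sqrt 3 * b * b
    let t := a / (a + Real.sqrt 3 * b)
    -- Fermat point T = (u/d, v/d) = (0, b/√3)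
    u / d = 0 ∧ v / d = b / Real.sqrt 3 ∧
    -- centroid G = ((0 + (−b) + b)/3, (a + 0 + 0)/3) = (0, a/3)
    (0 + -b + b) / 3 = 0 ∧ (a + 0 + 0) / 3 = a / 3 ∧
    -- H = (0, b²/a) is on the altitude from B (perpendicular to AC through B)
    ((0 - -b) * (b - 0) + (b ^ 2 / a - 0) * (0 - a) = 0) ∧
    -- and on the altitude from C (perpendicular to AB through C)
    ((0 - b) * (-b - 0) + (b ^ 2 / a - 0) * (0 - a) = 0) ∧
    -- T = (1 − t)·G + t·H
    (0 : ℝ) = (1 - t) * 0 + t * 0 ∧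
    b / Real.sqrt 3 = (1 - t) * (a / 3) + t * (b ^ 2 / a) := by
  intro u v d t
  have hs0 : (0:ℝ) < Real.sqrt 3 := Real.sqrt_pos.mpr (by norm_num)
  have hs : Real.sqrt 3 ^ 2 = 3 := Real.sq_sqrt (by norm_num)
  have hab : a + Real.sqrt 3 * b ≠ 0 := by positivity
  have hd : d = 2 * Real.sqrt 3 * (a + Real.sqrt 3 * b) ^ 2 := by
    simp only [d]; nlinarith [hs]
  refine ⟨by simp [u], ?_, by ring, by norm_num, by field_simp; ring, by field_simp; ring, by ring, ?_⟩
  · rw [hd]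
    have : v = 2 * b * (a + Real.sqrt 3 * b) ^ 2 := by simp only [v]; linear_combination (-2*b^3) * hs
    rw [this]
    rw [div_eq_div_iff (by positivity) hs0.ne']
    ring
  · simp only [t]
    rw [div_eq_iff hs0.ne', sub_div' hab]
    field_simp
    linear_combination (-a * b) * hs
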